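/- Let T be a compact operator on a Banach space and λ ≠ 0. Then ker(λI − T) = 0 if and only if ran(λI − T) = V. -/

import Mathlib

open Metric Set Pointwise

section FredholmAux

variable {𝕜 V : Type*} [RCLike 𝕜] [NormedAddCommGroup V] [NormedSpace 𝕜 V] [CompleteSpace V]


/-- Riesz-type lemma: given closed `M ≤ N` and `x ∈ N \ M`, find a unit vector in `N`
at distance ≥ 1/2 from `M`. -/
lemma riesz_step {N M : Submodule 𝕜 V} (hM : IsClosed (M : Set V)) (hle : M ≤ N)
    {x : V} (hxN : x ∈ N) (hxM : x ∉ M) :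
    ∃ y : V, y ∈ N ∧ ‖y‖ = 1 ∧ ∀ z ∈ M, (1:ℝ)/2 ≤ ‖y - z‖ := by
  have hMn : (M : Set V).Nonempty := ⟨0, M.zero_mem⟩
  set d := infDist x M with hd
  have hdpos : 0 < d := by
    rcases lt_or_eq_of_le (infDist_nonneg (s := (M : Set V)) (x := x)) with h | h
    · exact h
    · exact absurd ((hM.mem_iff_infDist_zero hMn).2 h.symm) hxM
  obtain ⟨y₀, hy₀M, hxy₀⟩ : ∃ y ∈ (M : Set V), dist x y < (3/2) * d := by
    refine (infDist_lt_iff hMn).mp ?_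
    nlinarith
  set v := x - y₀ with hv
  have hvN : v ∈ N := N.sub_mem hxN (hle hy₀M)
  have hvnorm : ‖v‖ < (3/2) * d := by rwa [hv, ← dist_eq_norm]
  have hvpos : 0 < ‖v‖ := by
    rw [norm_pos_iff]
    intro h
    rw [hv, sub_eq_zero] at h
    exact hxM (h ▸ hy₀M)
  have hkey : ∀ z ∈ M, d ≤ ‖v - z‖ := by
    intro z hz
    have : d ≤ dist x (y₀ + z) := infDist_le_dist_of_mem (M.add_mem hy₀M hz)
    rwa [dist_eq_norm, show x - (y₀ + z) = v - z by rw [hv]; abel] at this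
  set c : 𝕜 := (‖v‖ : 𝕜) with hc
  have hcnorm : ‖c‖ = ‖v‖ := by simp [hc, abs_of_pos hvpos]
  have hcne : c ≠ 0 := by
    rw [hc, ne_eq, RCLike.ofReal_eq_zero]
    exact hvpos.ne'
  refine ⟨c⁻¹ • v, N.smul_mem _ hvN, ?_, ?_⟩
  · rw [norm_smul, norm_inv, hcnorm, inv_mul_cancel₀ hvpos.ne']
  · intro z hz
    have h1 : c⁻¹ • v - z = c⁻¹ • (v - c • z) := by
      rw [smul_sub c⁻¹ v (c • z), smul_smul, inv_mul_cancel₀ hcne, one_smul]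
    rw [show c⁻¹ • v - z = c⁻¹ • (v - c • z) from h1, norm_smul, norm_inv, hcnorm]
    have h2 : d ≤ ‖v - c • z‖ := hkey _ (M.smul_mem _ hz)
    rw [inv_mul_eq_div, le_div_iff₀ hvpos]
    nlinarith


/-- A compact operator admits no bounded sequence with uniformly separated images. -/
lemma no_separated_seq (T : V →L[𝕜] V) (hT : IsCompactOperator T)
    (y : ℕ → V) (hy : ∀ n, ‖y n‖ ≤ 1) {ε : ℝ} (hε : 0 < ε)
    (hsep : ∀ m n, m < n → ε ≤ ‖T (y n) - T (y m)‖) : False := by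
  have hbd : Bornology.IsBounded (Set.range y) := by
    apply Bornology.IsBounded.subset (Metric.isBounded_closedBall (x := (0:V)) (r := 1))
    rintro _ ⟨n, rfl⟩
    simpa [Metric.mem_closedBall, dist_eq_norm] using hy n
  obtain ⟨K, hK, hKsub⟩ := hT.image_subset_compact_of_bounded hbd
  have hmem : ∀ n, T (y n) ∈ K := fun n => hKsub ⟨y n, ⟨n, rfl⟩, rfl⟩
  obtain ⟨a, -, φ, hφ, hconv⟩ := hK.tendsto_subseq hmem
  have hcauchy := hconv.cauchySeq
  rw [Metric.cauchySeq_iff] at hcauchy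
  obtain ⟨N, hN⟩ := hcauchy ε hε
  have h1 := hN (N+1) (by omega) N (le_refl N)
  have h2 : ε ≤ dist (T (y (φ (N+1)))) (T (y (φ N))) := by
    rw [dist_eq_norm]
    exact hsep _ _ (hφ (by omega))
  exact absurd (lt_of_le_of_lt h2 h1) (lt_irrefl _)


lemma ker_finiteDimensional (T : V →L[𝕜] V) (hT : IsCompactOperator T)
    (lam : 𝕜) (hlam : lam ≠ 0) :
    FiniteDimensional 𝕜 (LinearMap.ker ((lam • ContinuousLinearMap.id 𝕜 V - T : V →L[𝕜] V) : V →ₗ[𝕜] V)) := by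
  set S := lam • ContinuousLinearMap.id 𝕜 V - T with hS
  have hSx : ∀ x, S x = lam • x - T x := fun x => by simp [hS]
  set N := LinearMap.ker (S : V →ₗ[𝕜] V) with hN
  set B : Set V := {x | x ∈ N ∧ ‖x‖ ≤ 1} with hB
  have hbd : Bornology.IsBounded B := by
    apply Bornology.IsBounded.subset (Metric.isBounded_closedBall (x := (0:V)) (r := 1))
    rintro x ⟨-, hx⟩
    simpa [Metric.mem_closedBall, dist_eq_norm] using hx
  obtain ⟨K, hK, hKsub⟩ := hT.image_subset_compact_of_bounded hbd
  have hBsub : B ⊆ (lam⁻¹ • K : Set V) := by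
    intro x hx
    have hx1 : S x = 0 := by
      have := hx.1
      rwa [hN, LinearMap.mem_ker] at this
    have hxk : T x = lam • x := by
      have h2 := hSx x ▸ hx1
      linear_combination (norm := module) -h2
    refine ⟨T x, hKsub ⟨x, hx, rfl⟩, ?_⟩
    show lam⁻¹ • (T x) = x
    rw [hxk, smul_smul, inv_mul_cancel₀ hlam, one_smul]
  have hBclosed : IsClosed B := by
    have hBeq : B = (N : Set V) ∩ Metric.closedBall 0 1 := by
      ext x; simp [hB, Metric.mem_closedBall, dist_eq_norm]
    rw [hBeq]
    exact (ContinuousLinearMap.isClosed_ker S).inter Metric.isClosed_closedBall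
  have hBcompact : IsCompact B := (hK.smul lam⁻¹).of_isClosed_subset hBclosed hBsub
  have hball : IsCompact (Metric.closedBall (0 : N) 1) := by
    rw [Topology.IsEmbedding.isCompact_iff Topology.IsEmbedding.subtypeVal]
    have : (Subtype.val : N → V) '' Metric.closedBall 0 1 = B := by
      ext x
      constructor
      · rintro ⟨⟨y, hy⟩, hmem, rfl⟩
        simp only [Metric.mem_closedBall, dist_eq_norm] at hmem
        exact ⟨hy, by simpa using hmem⟩
      · rintro ⟨hx1, hx2⟩
        exact ⟨⟨x, hx1⟩, by simpa [Metric.mem_closedBall, dist_eq_norm] using hx2, rfl⟩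
    rwa [this]
  exact FiniteDimensional.of_isCompact_closedBall₀ 𝕜 one_pos hball


lemma range_isClosed (T : V →L[𝕜] V) (hT : IsCompactOperator T)
    (lam : 𝕜) (hlam : lam ≠ 0)
    (hfd : FiniteDimensional 𝕜 (LinearMap.ker ((lam • ContinuousLinearMap.id 𝕜 V - T : V →L[𝕜] V) : V →ₗ[𝕜] V))) :
    IsClosed ((LinearMap.range ((lam • ContinuousLinearMap.id 𝕜 V - T : V →L[𝕜] V) : V →ₗ[𝕜] V)) : Set V) := by
  set S := lam • ContinuousLinearMap.id 𝕜 V - T with hS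
  have hSx : ∀ x, S x = lam • x - T x := fun x => by simp [hS]
  set N := LinearMap.ker (S : V →ₗ[𝕜] V) with hN
  -- complement of the kernel
  obtain ⟨M, hMclosed, hcompl⟩ :=
    (Submodule.ClosedComplemented.of_finiteDimensional N).exists_isClosed_isCompl
  have hMcomplete : CompleteSpace M := hMclosed.isComplete.completeSpace_coe
  -- S restricted to M
  set g : M →L[𝕜] V := S.comp M.subtypeL with hg
  have hrange : LinearMap.range (g : M →ₗ[𝕜] V) = LinearMap.range (S : V →ₗ[𝕜] V) := by
    apply le_antisymm
    · rintro _ ⟨m, rfl⟩; exact ⟨m, rfl⟩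
    · rintro _ ⟨x, rfl⟩
      obtain ⟨k, m, hk, hm, rfl⟩ := Submodule.codisjoint_iff_exists_add_eq.mp hcompl.codisjoint x
      refine ⟨⟨m, hm⟩, ?_⟩
      have hk0 : S k = 0 := hk
      simp [hg, map_add, hk0]
  -- g is injective
  have hginj : ∀ m : M, g m = 0 → m = 0 := by
    rintro ⟨m, hm⟩ h
    have hmk : m ∈ N := by
      show S m = 0
      exact h
    have : m ∈ N ⊓ M := ⟨hmk, hm⟩
    rw [hcompl.inf_eq_bot] at this
    simpa using this
  -- g is bounded below
  have hbb : ∃ c : ℝ, 0 < c ∧ ∀ m : M, c * ‖m‖ ≤ ‖g m‖ := by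
    by_contra hcon
    push_neg at hcon
    have hseq : ∀ n : ℕ, ∃ y : M, ‖y‖ = 1 ∧ ‖g y‖ < 1 / (n + 1) := by
      intro n
      obtain ⟨m, hm⟩ := hcon (1/((n:ℝ)+1)) (by positivity)
      have hmne : m ≠ 0 := by
        intro h
        rw [h] at hm
        simp only [map_zero, norm_zero, mul_zero] at hm
        exact absurd hm (lt_irrefl _)
      have hmpos : (0:ℝ) < ‖m‖ := norm_pos_iff.mpr hmne
      set cc : 𝕜 := (‖m‖ : 𝕜) with hcc
      have hccne : cc ≠ 0 := by
        rw [hcc, ne_eq, RCLike.ofReal_eq_zero]; exact hmpos.ne'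
      have hccnorm : ‖cc‖ = ‖m‖ := by simp [hcc, abs_of_pos hmpos]
      refine ⟨cc⁻¹ • m, ?_, ?_⟩
      · rw [norm_smul, norm_inv, hccnorm, inv_mul_cancel₀ hmpos.ne']
      · rw [map_smul, norm_smul, norm_inv, hccnorm, inv_mul_lt_iff₀ hmpos]
        calc ‖g m‖ < 1/((n:ℝ)+1) * ‖m‖ := hm
        _ = ‖m‖ * (1/((n:ℝ)+1)) := by ring
        _ ≤ ‖m‖ * (1/((n:ℝ)+1)) := le_refl _
    choose y hy1 hy2 using hseq
    -- images T (y n) lie in a compact set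
    have hbd2 : Bornology.IsBounded (Set.range (fun n => ((y n : V)))) := by
      apply Bornology.IsBounded.subset (Metric.isBounded_closedBall (x := (0:V)) (r := 1))
      rintro _ ⟨n, rfl⟩
      simp only [Metric.mem_closedBall, dist_eq_norm, sub_zero]
      exact le_of_eq (hy1 n)
    obtain ⟨K, hK, hKsub⟩ := hT.image_subset_compact_of_bounded hbd2
    have hmem : ∀ n, T ((y n : V)) ∈ K := fun n => hKsub ⟨(y n : V), ⟨n, rfl⟩, rfl⟩
    obtain ⟨z, -, φ, hφ, hconv⟩ := hK.tendsto_subseq hmem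
    -- S (y n) → 0
    have hS0 : Filter.Tendsto (fun k => S ((y (φ k) : V))) Filter.atTop (nhds 0) := by
      apply squeeze_zero_norm (fun k => le_of_lt (hy2 (φ k)))
      refine squeeze_zero (g := fun k : ℕ => 1/((k:ℝ)+1)) (fun k => by positivity)
        (fun k => ?_) tendsto_one_div_add_atTop_nhds_zero_nat
      apply one_div_le_one_div_of_le (by positivity)
      have : (k:ℝ) ≤ (φ k : ℝ) := by exact_mod_cast hφ.le_apply
      linarith
    -- y (φ k) → lam⁻¹ • z
    have hyconv : Filter.Tendsto (fun k => ((y (φ k) : V))) Filter.atTop (nhds (lam⁻¹ • z)) := by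
      have hform : ∀ k, ((y (φ k) : V)) = lam⁻¹ • (S ((y (φ k) : V)) + T ((y (φ k) : V))) := by
        intro k
        rw [hSx, sub_add_cancel, smul_smul, inv_mul_cancel₀ hlam, one_smul]
      have h3 : Filter.Tendsto (fun k => S ((y (φ k) : V)) + T ((y (φ k) : V)))
          Filter.atTop (nhds (0 + z)) := Filter.Tendsto.add hS0 hconv
      rw [zero_add] at h3
      exact (h3.const_smul lam⁻¹).congr (fun k => (hform k).symm)
    set w := lam⁻¹ • z with hw
    have hwM : w ∈ M := hMclosed.mem_of_tendsto hyconv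
      (Filter.Eventually.of_forall (fun k => (y (φ k)).2))
    have hwnorm : ‖w‖ = 1 := by
      have h1 : Filter.Tendsto (fun k => ‖((y (φ k) : V))‖) Filter.atTop (nhds ‖w‖) :=
        hyconv.norm
      have h2 : (fun k => ‖((y (φ k) : V))‖) = fun _ => (1:ℝ) := by
        funext k; exact hy1 (φ k)
      rw [h2] at h1
      exact (tendsto_const_nhds_iff.mp h1).symm
    have hSw : S w = 0 := by
      have h1 : Filter.Tendsto (fun k => S ((y (φ k) : V))) Filter.atTop (nhds (S w)) :=
        (S.continuous.tendsto w).comp hyconv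
      exact tendsto_nhds_unique h1 hS0
    have hwN : w ∈ N := hSw
    have : w ∈ N ⊓ M := ⟨hwN, hwM⟩
    rw [hcompl.inf_eq_bot] at this
    rw [Submodule.mem_bot] at this
    rw [this, norm_zero] at hwnorm
    norm_num at hwnorm
  obtain ⟨c, hc, hcb⟩ := hbb
  have hal : AntilipschitzWith (⟨c⁻¹, by positivity⟩ : NNReal) g := by
    apply g.antilipschitz_of_bound
    intro x
    show ‖x‖ ≤ c⁻¹ * ‖g x‖
    rw [inv_mul_eq_div, le_div_iff₀ hc, mul_comm]
    exact hcb x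
  have hclosed := hal.isClosed_range g.uniformContinuous
  have heq : ((LinearMap.range (S : V →ₗ[𝕜] V)) : Set V) = Set.range ⇑g := by
    ext x
    rw [SetLike.mem_coe, ← hrange]
    exact ⟨fun ⟨m, hm⟩ => ⟨m, hm⟩, fun ⟨m, hm⟩ => ⟨m, hm⟩⟩
  rw [heq]
  exact hclosed


lemma pow_form (T : V →L[𝕜] V) (hT : IsCompactOperator T) (lam : 𝕜) :
    ∀ n : ℕ, ∃ Tn : V →L[𝕜] V, IsCompactOperator Tn ∧
      (lam • ContinuousLinearMap.id 𝕜 V - T)^n = lam^n • ContinuousLinearMap.id 𝕜 V - Tn := by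
  intro n
  induction n with
  | zero =>
    refine ⟨0, isCompactOperator_zero, ?_⟩
    simp [ContinuousLinearMap.one_def]
  | succ n ih =>
    obtain ⟨Tn, hTn, hform⟩ := ih
    set S := lam • ContinuousLinearMap.id 𝕜 V - T with hS
    refine ⟨lam^n • T + Tn.comp S, ?_, ?_⟩
    · have h1 : IsCompactOperator ⇑(lam^n • T) := by
        have := hT.smul (lam^n)
        simpa using this
      have h2 : IsCompactOperator ⇑(Tn.comp S) := by
        have := hTn.comp_clm S
        exact this
      have := h1.add h2
      simpa using this
    · ext x
      rw [pow_succ, ContinuousLinearMap.mul_apply, hform]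
      simp only [ContinuousLinearMap.sub_apply, ContinuousLinearMap.smul_apply,
        ContinuousLinearMap.id_apply, ContinuousLinearMap.add_apply,
        ContinuousLinearMap.comp_apply, map_sub, map_smul, pow_succ]
      rw [hS]
      simp only [ContinuousLinearMap.sub_apply, ContinuousLinearMap.smul_apply,
        ContinuousLinearMap.id_apply, map_sub, map_smul]
      module


lemma sep_helper (T S : V →L[𝕜] V) (lam : 𝕜)
    (hSx : ∀ x, S x = lam • x - T x) {A : Submodule 𝕜 V} {a b : V}
    (h : ∀ z ∈ A, (1:ℝ)/2 ≤ ‖a - z‖) (h1 : S a ∈ A) (h2 : b ∈ A) (h3 : S b ∈ A) :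
    ‖lam‖/2 ≤ ‖T a - T b‖ := by
  by_cases hlam : lam = 0
  · simp [hlam]
  set w := lam⁻¹ • (S a + lam • b - S b) with hw
  have hwA : w ∈ A := A.smul_mem _ (A.sub_mem (A.add_mem h1 (A.smul_mem _ h2)) h3)
  have key : T a - T b = lam • (a - w) := by
    rw [hw, smul_sub, smul_smul, mul_inv_cancel₀ hlam, one_smul]
    rw [hSx a, hSx b]
    module
  rw [key, norm_smul]
  have := h w hwA
  calc ‖lam‖/2 = ‖lam‖ * (1/2) := by ring
  _ ≤ ‖lam‖ * ‖a - w‖ := by gcongr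

lemma surj_to_inj (T : V →L[𝕜] V) (hT : IsCompactOperator T) (lam : 𝕜) (hlam : lam ≠ 0)
    (hsurj : LinearMap.range ((lam • ContinuousLinearMap.id 𝕜 V - T : V →L[𝕜] V) : V →ₗ[𝕜] V) = ⊤) :
    LinearMap.ker ((lam • ContinuousLinearMap.id 𝕜 V - T : V →L[𝕜] V) : V →ₗ[𝕜] V) = ⊥ := by
  set S := lam • ContinuousLinearMap.id 𝕜 V - T with hS
  have hSx : ∀ x, S x = lam • x - T x := fun x => by simp [hS]
  by_contra hker
  obtain ⟨x₀, hx₀mem, hx₀ne⟩ := Submodule.exists_mem_ne_zero_of_ne_bot hker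
  have hsurj' : Function.Surjective S := by
    exact LinearMap.range_eq_top.mp hsurj
  -- iterated preimages
  set f := Function.surjInv hsurj' with hf
  have hfS : ∀ v, S (f v) = v := fun v => Function.surjInv_eq hsurj' v
  set x : ℕ → V := fun n => f^[n] x₀ with hx
  have hx0 : x 0 = x₀ := rfl
  have hxsucc : ∀ n, x (n+1) = f (x n) := fun n => Function.iterate_succ_apply' f n x₀
  have hxS : ∀ n, S (x (n+1)) = x n := fun n => by rw [hxsucc]; exact hfS _
  -- x n ∈ ker S^(n+1) \ ker S^n
  have hker1 : ∀ n, (S^(n+1)) (x n) = 0 := by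
    intro n
    induction n with
    | zero =>
      rw [pow_one, hx0]
      exact hx₀mem
    | succ n ih =>
      rw [pow_succ, ContinuousLinearMap.mul_apply, hxS, ih]
  have hker2 : ∀ n, (S^n) (x n) ≠ 0 := by
    intro n
    induction n with
    | zero => rw [pow_zero, hx0]; simpa using hx₀ne
    | succ n ih =>
      rw [pow_succ, ContinuousLinearMap.mul_apply, hxS]
      exact ih
  -- chain monotone
  have hchain : ∀ k l : ℕ, k ≤ l → LinearMap.ker ((S^k : V →L[𝕜] V) : V →ₗ[𝕜] V) ≤ LinearMap.ker ((S^l : V →L[𝕜] V) : V →ₗ[𝕜] V) := by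
    intro k l hkl
    obtain ⟨d, rfl⟩ := Nat.exists_eq_add_of_le hkl
    intro v hv
    rw [LinearMap.mem_ker, ContinuousLinearMap.coe_coe] at hv ⊢
    rw [add_comm, pow_add, ContinuousLinearMap.mul_apply, hv, map_zero]
  -- Riesz sequence
  have hys : ∀ n : ℕ, ∃ y : V, y ∈ LinearMap.ker ((S^(n+1) : V →L[𝕜] V) : V →ₗ[𝕜] V) ∧ ‖y‖ = 1 ∧
      ∀ z ∈ LinearMap.ker ((S^n : V →L[𝕜] V) : V →ₗ[𝕜] V), (1:ℝ)/2 ≤ ‖y - z‖ := by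
    intro n
    exact riesz_step (ContinuousLinearMap.isClosed_ker (S^n)) (hchain n (n+1) (by omega))
      (show x n ∈ LinearMap.ker ((S^(n+1) : V →L[𝕜] V) : V →ₗ[𝕜] V) from hker1 n) (hker2 n)
  choose y hy1 hy2 hy3 using hys
  refine no_separated_seq T hT y (fun n => le_of_eq (hy2 n)) (ε := ‖lam‖/2)
    (by have := norm_pos_iff.mpr hlam; positivity) ?_
  intro m n hmn
  refine sep_helper T S lam hSx (A := LinearMap.ker ((S^n : V →L[𝕜] V) : V →ₗ[𝕜] V)) (hy3 n) ?_ ?_ ?_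
  · rw [LinearMap.mem_ker, ContinuousLinearMap.coe_coe, ← ContinuousLinearMap.mul_apply, ← pow_succ]
    exact hy1 n
  · exact hchain (m+1) n (by omega) (hy1 m)
  · have : S (y m) ∈ LinearMap.ker ((S^m : V →L[𝕜] V) : V →ₗ[𝕜] V) := by
      rw [LinearMap.mem_ker, ContinuousLinearMap.coe_coe, ← ContinuousLinearMap.mul_apply, ← pow_succ]
      exact hy1 m
    exact hchain m n (by omega) this

lemma inj_to_surj (T : V →L[𝕜] V) (hT : IsCompactOperator T) (lam : 𝕜) (hlam : lam ≠ 0)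
    (hker : LinearMap.ker ((lam • ContinuousLinearMap.id 𝕜 V - T : V →L[𝕜] V) : V →ₗ[𝕜] V) = ⊥) :
    LinearMap.range ((lam • ContinuousLinearMap.id 𝕜 V - T : V →L[𝕜] V) : V →ₗ[𝕜] V) = ⊤ := by
  set S := lam • ContinuousLinearMap.id 𝕜 V - T with hS
  have hSx : ∀ x, S x = lam • x - T x := fun x => by simp [hS]
  have hinj : Function.Injective S := by
    have := LinearMap.ker_eq_bot (M := V) (M₂ := V) (f := (S : V →ₗ[𝕜] V))
    rw [ContinuousLinearMap.coe_coe] at this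
    rw [← this]
    exact_mod_cast hker
  have hinjn : ∀ n : ℕ, Function.Injective (S^n) := by
    intro n
    induction n with
    | zero => rw [pow_zero]; exact fun a b h => h
    | succ n ih =>
      rw [pow_succ]
      intro a b h
      rw [ContinuousLinearMap.mul_apply, ContinuousLinearMap.mul_apply] at h
      exact hinj (ih h)
  by_contra hrange
  obtain ⟨x₀, hx₀⟩ : ∃ x : V, x ∉ LinearMap.range (S : V →ₗ[𝕜] V) := by
    by_contra hcon
    push_neg at hcon
    exact hrange (Submodule.eq_top_iff'.mpr hcon)
  -- ranges R n are closed
  have hclosed : ∀ n : ℕ, IsClosed ((LinearMap.range ((S^n : V →L[𝕜] V) : V →ₗ[𝕜] V)) : Set V) := by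
    intro n
    obtain ⟨Tn, hTn, hform⟩ := pow_form T hT lam n
    rw [show S = lam • ContinuousLinearMap.id 𝕜 V - T from hS, hform]
    exact range_isClosed Tn hTn (lam^n) (pow_ne_zero n hlam)
      (ker_finiteDimensional Tn hTn (lam^n) (pow_ne_zero n hlam))
  -- chain antitone
  have hchain : ∀ k l : ℕ, k ≤ l → LinearMap.range ((S^l : V →L[𝕜] V) : V →ₗ[𝕜] V) ≤ LinearMap.range ((S^k : V →L[𝕜] V) : V →ₗ[𝕜] V) := by
    intro k l hkl
    obtain ⟨d, rfl⟩ := Nat.exists_eq_add_of_le hkl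
    rintro _ ⟨u, rfl⟩
    exact ⟨(S^d) u, by simp only [ContinuousLinearMap.coe_coe]; rw [← ContinuousLinearMap.mul_apply, ← pow_add]⟩
  -- strict decrease witness
  have hwit : ∀ n : ℕ, (S^n) x₀ ∈ LinearMap.range ((S^n : V →L[𝕜] V) : V →ₗ[𝕜] V) ∧
      (S^n) x₀ ∉ LinearMap.range ((S^(n+1) : V →L[𝕜] V) : V →ₗ[𝕜] V) := by
    intro n
    refine ⟨⟨x₀, rfl⟩, ?_⟩
    rintro ⟨u, hu⟩
    rw [ContinuousLinearMap.coe_coe, pow_succ, ContinuousLinearMap.mul_apply] at hu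
    exact hx₀ ⟨u, hinjn n hu⟩
  -- Riesz sequence
  have hys : ∀ n : ℕ, ∃ y : V, y ∈ LinearMap.range ((S^n : V →L[𝕜] V) : V →ₗ[𝕜] V) ∧ ‖y‖ = 1 ∧
      ∀ z ∈ LinearMap.range ((S^(n+1) : V →L[𝕜] V) : V →ₗ[𝕜] V), (1:ℝ)/2 ≤ ‖y - z‖ := by
    intro n
    exact riesz_step (hclosed (n+1)) (hchain n (n+1) (by omega))
      (hwit n).1 (hwit n).2
  choose y hy1 hy2 hy3 using hys
  refine no_separated_seq T hT y (fun n => le_of_eq (hy2 n)) (ε := ‖lam‖/2)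
    (by have := norm_pos_iff.mpr hlam; positivity) ?_
  intro m n hmn
  rw [norm_sub_rev]
  refine sep_helper T S lam hSx (A := LinearMap.range ((S^(m+1) : V →L[𝕜] V) : V →ₗ[𝕜] V)) (hy3 m) ?_ ?_ ?_
  · obtain ⟨u, hu⟩ := hy1 m
    refine ⟨u, ?_⟩
    simp only [ContinuousLinearMap.coe_coe] at hu ⊢; rw [pow_succ', ContinuousLinearMap.mul_apply, hu]
  · exact hchain (m+1) n (by omega) (hy1 n)
  · obtain ⟨u, hu⟩ := hy1 n
    refine hchain (m+1) (n+1) (by omega) ⟨u, ?_⟩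
    simp only [ContinuousLinearMap.coe_coe] at hu ⊢; rw [pow_succ', ContinuousLinearMap.mul_apply, hu]

end FredholmAux

theorem compact_ker_bot_iff_range_top {𝕜 V : Type*} [RCLike 𝕜] [NormedAddCommGroup V]
    [NormedSpace 𝕜 V] [CompleteSpace V] (T : V →L[𝕜] V) (hT : IsCompactOperator T)
    (lam : 𝕜) (hlam : lam ≠ 0) :
    LinearMap.ker ((lam • ContinuousLinearMap.id 𝕜 V - T : V →L[𝕜] V) : V →ₗ[𝕜] V) = ⊥ ↔
      LinearMap.range ((lam • ContinuousLinearMap.id 𝕜 V - T : V →L[𝕜] V) : V →ₗ[𝕜] V) = ⊤ :=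
  ⟨inj_to_surj T hT lam hlam, surj_to_inj T hT lam hlam⟩
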